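/- Let λ > 1 and σ > 0. For each w > 0 define F(w) = min over σ̄ ≥ 0 of (1−λ)·log(1 + w·σ̄²) − log(σ² + σ̄²) + λ·w·σ̄². Then F is nondecreasing in w; consequently the minimizing sensor index in the single-sensor attack is the one with the smallest diagonal entry (W)_{ii}. -/
import Mathlib


/-- For `λ > 1` and `σ > 0`, the optimized single-sensor cost
`F(w) = min_{σ̄ ≥ 0} [(1−λ)·log(1 + w·σ̄²) − log(σ² + σ̄²) + λ·w·σ̄²]`
is nondecreasing in `w` on `(0, ∞)`. -/
theorem stmt_7 (lam σ : ℝ) (hlam : 1 < lam) (hσ : 0 < σ) :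
    MonotoneOn (fun w : ℝ =>
      sInf ((fun s : ℝ =>
        (1 - lam) * Real.log (1 + w * s ^ 2) - Real.log (σ ^ 2 + s ^ 2)
          + lam * w * s ^ 2) '' Set.Ici 0)) (Set.Ioi 0) := by
  intro w1 hw1 w2 hw2 h12
  simp only [Set.mem_Ioi] at hw1 hw2
  set g : ℝ → ℝ → ℝ := fun w s =>
    (1 - lam) * Real.log (1 + w * s ^ 2) - Real.log (σ ^ 2 + s ^ 2)
      + lam * w * s ^ 2 with hg
  -- boundedness below for w1
  have hbdd : BddBelow (g w1 '' Set.Ici 0) := by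
    refine ⟨1 + Real.log w1 - w1 * σ ^ 2, ?_⟩
    rintro _ ⟨s, hs, rfl⟩
    simp only [Set.mem_Ici] at hs
    have hs2 : 0 ≤ s ^ 2 := sq_nonneg s
    have hpos1 : 0 < 1 + w1 * s ^ 2 := by nlinarith
    have hpos2 : 0 < σ ^ 2 + s ^ 2 := by positivity
    have h1 : Real.log (1 + w1 * s ^ 2) ≤ w1 * s ^ 2 := by
      have := Real.log_le_sub_one_of_pos hpos1; linarith
    have h2 : Real.log (σ ^ 2 + s ^ 2) ≤ w1 * (σ ^ 2 + s ^ 2) - 1 - Real.log w1 := by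
      have hml : Real.log (w1 * (σ ^ 2 + s ^ 2)) ≤ w1 * (σ ^ 2 + s ^ 2) - 1 :=
        Real.log_le_sub_one_of_pos (by positivity)
      rw [Real.log_mul (ne_of_gt hw1) (ne_of_gt hpos2)] at hml
      linarith
    have h3 : (1 - lam) * (w1 * s ^ 2) ≤ (1 - lam) * Real.log (1 + w1 * s ^ 2) :=
      mul_le_mul_of_nonpos_left h1 (by linarith)
    simp only [hg]
    nlinarith
  have hne : (g w2 '' Set.Ici 0).Nonempty := ⟨g w2 0, ⟨0, Set.self_mem_Ici, rfl⟩⟩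
  refine le_csInf hne ?_
  rintro _ ⟨s, hs, rfl⟩
  simp only [Set.mem_Ici] at hs
  have hs2 : 0 ≤ s ^ 2 := sq_nonneg s
  have key : g w1 s ≤ g w2 s := by
    have ha : (0:ℝ) < 1 + w1 * s ^ 2 := by nlinarith
    have hb : (0:ℝ) < 1 + w2 * s ^ 2 := by nlinarith
    have hab : 1 + w1 * s ^ 2 ≤ 1 + w2 * s ^ 2 := by nlinarith
    have hlog : Real.log (1 + w2 * s ^ 2) - Real.log (1 + w1 * s ^ 2)
        ≤ (w2 - w1) * s ^ 2 := by
      have h := Real.log_le_sub_one_of_pos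
        (div_pos hb ha)
      rw [Real.log_div (ne_of_gt hb) (ne_of_gt ha)] at h
      have hdiv : (1 + w2 * s ^ 2) / (1 + w1 * s ^ 2) - 1
          = ((w2 - w1) * s ^ 2) / (1 + w1 * s ^ 2) := by
        field_simp; ring
      rw [hdiv] at h
      have : ((w2 - w1) * s ^ 2) / (1 + w1 * s ^ 2) ≤ (w2 - w1) * s ^ 2 := by
        apply div_le_self (by nlinarith) (by nlinarith)
      linarith
    simp only [hg]
    nlinarith [mul_nonneg (sub_nonneg.mpr h12) hs2]
  calc sInf (g w1 '' Set.Ici 0) ≤ g w1 s := csInf_le hbdd ⟨s, hs, rfl⟩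
    _ ≤ g w2 s := key
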